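/- Assume a trading system with trade results t_1, …, t_N ∈ ℝ \ {0}, at least one of which is negative, maximal loss t̂ := max{|t_i| : t_i < 0} > 0, weights p_i > 0 with Σ_{i=1}^N p_i = 1, and positive expectation Σ_{i=1}^N p_i·t_i > 0. Then there exists a unique f^opt ∈ (0,1) such that Σ_{i=1}^N p_i·log(1 + f^opt·t_i/t̂) ≥ Σ_{i=1}^N p_i·log(1 + f·t_i/t̂) for all f ∈ [0,1); equivalently, the weighted geometric mean Γ(f) := Π_{i=1}^N (1 + f·t_i/t̂)^{p_i} has a unique maximizer on [0,1), lying in (0,1). -/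

import Mathlib

open Set Finset

lemma my_log_le (x : ℝ) (hx : -1 < x) : Real.log (1+x) ≤ x := by
  have := Real.log_le_sub_one_of_pos (by linarith : (0:ℝ) < 1+x)
  linarith

lemma my_log_ge (x : ℝ) (hx : -(1/2) ≤ x) : x - 2*x^2 ≤ Real.log (1+x) := by
  have h1 : (0:ℝ) < 1 + x := by linarith
  have h2 : (0:ℝ) < (1+x)⁻¹ := by positivity
  have h3 := Real.log_le_sub_one_of_pos h2
  rw [Real.log_inv] at h3
  have h4 : x / (1+x) ≤ Real.log (1+x) := by
    have : (1+x)⁻¹ - 1 = -(x/(1+x)) := by field_simp; ring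
    rw [this] at h3; linarith
  have h5 : x - 2*x^2 ≤ x / (1+x) := by
    rw [le_div_iff₀ h1]; nlinarith
  linarith

lemma term_concave (c q : ℝ) (hq : 0 ≤ q)
    (hpos : ∀ f ∈ Set.Ico (0:ℝ) 1, 0 < 1 + f * c) :
    ConcaveOn ℝ (Set.Ico (0:ℝ) 1) (fun f => q * Real.log (1 + f * c)) := by
  refine ⟨convex_Ico 0 1, ?_⟩
  intro x hx y hy a b ha hb hab
  have hlog := strictConcaveOn_log_Ioi.concaveOn.2 (Set.mem_Ioi.2 (hpos x hx))
    (Set.mem_Ioi.2 (hpos y hy)) ha hb hab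
  have heq : a • (1 + x*c) + b • (1 + y*c) = 1 + (a • x + b • y) * c := by
    simp only [smul_eq_mul]; nlinarith [hab]
  rw [heq] at hlog
  simp only [smul_eq_mul] at *
  nlinarith [hlog]

lemma term_strict (c q : ℝ) (hc : c ≠ 0) (hq : 0 < q)
    (hpos : ∀ f ∈ Set.Ico (0:ℝ) 1, 0 < 1 + f * c) :
    StrictConcaveOn ℝ (Set.Ico (0:ℝ) 1) (fun f => q * Real.log (1 + f * c)) := by
  refine ⟨convex_Ico 0 1, ?_⟩
  intro x hx y hy hne a b ha hb hab
  have hne' : 1 + x*c ≠ 1 + y*c := by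
    intro h; apply hne
    have : x * c = y * c := by linarith
    exact mul_right_cancel₀ hc this
  have hlog := strictConcaveOn_log_Ioi.2 (Set.mem_Ioi.2 (hpos x hx))
    (Set.mem_Ioi.2 (hpos y hy)) hne' ha hb hab
  have heq : a • (1 + x*c) + b • (1 + y*c) = 1 + (a • x + b • y) * c := by
    simp only [smul_eq_mul]; nlinarith [hab]
  rw [heq] at hlog
  simp only [smul_eq_mul] at *
  nlinarith [hlog]

/-- Optimal f with probability weights: there is a unique `f^opt ∈ (0,1)` maximizing
`∑ pᵢ·log(1 + f·tᵢ/t̂)` (equivalently the weighted geometric mean `Γ`) over `[0,1)`. -/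
theorem stmt_2 (N : ℕ) (hN : 1 ≤ N) (t : Fin N → ℝ) (ht : ∀ i, t i ≠ 0)
    (hneg : ∃ i, t i < 0) (that : ℝ)
    (hthat : IsGreatest {x : ℝ | ∃ i, t i < 0 ∧ x = |t i|} that)
    (hthat_pos : 0 < that)
    (p : Fin N → ℝ) (hp : ∀ i, 0 < p i) (hpsum : ∑ i, p i = 1)
    (hprof : 0 < ∑ i, p i * t i) :
    ∃! fopt : ℝ, fopt ∈ Set.Ioo (0 : ℝ) 1 ∧
      ∀ f ∈ Set.Ico (0 : ℝ) 1,
        ∑ i, p i * Real.log (1 + f * t i / that)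
          ≤ ∑ i, p i * Real.log (1 + fopt * t i / that) := by
  classical
  set c : Fin N → ℝ := fun i => t i / that with hc_def
  set G : ℝ → ℝ := fun f => ∑ i, p i * Real.log (1 + f * c i) with hG_def
  have hGeq : ∀ f : ℝ, (∑ i, p i * Real.log (1 + f * t i / that)) = G f := by
    intro f; simp only [hG_def, hc_def]
    exact Finset.sum_congr rfl fun i _ => by rw [mul_div_assoc]
  -- the worst trade
  obtain ⟨⟨j, hj_neg, hj_eq⟩, hub⟩ := hthat
  have htj : t j = -that := by
    rw [abs_of_neg hj_neg] at hj_eq; linarith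
  have hcj : c j = -1 := by
    simp only [hc_def, htj]; field_simp
  -- basic facts about c
  have hc_ne : ∀ i, c i ≠ 0 := fun i => div_ne_zero (ht i) (ne_of_gt hthat_pos)
  have hc_ge : ∀ i, -1 ≤ c i := by
    intro i
    rcases lt_or_gt_of_ne (ht i) with h | h
    · have : |t i| ≤ that := hub ⟨i, h, rfl⟩
      rw [abs_of_neg h] at this
      rw [hc_def]
      rw [neg_le, ← neg_div]
      exact (div_le_one hthat_pos).2 (by linarith)
    · have : 0 < c i := div_pos h hthat_pos
      linarith
  have hpos : ∀ i, ∀ f ∈ Set.Ico (0:ℝ) 1, 0 < 1 + f * c i := by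
    intro i f hf
    rcases lt_or_gt_of_ne (hc_ne i) with h | h
    · nlinarith [hc_ge i, hf.1, hf.2]
    · nlinarith [hf.1]
  -- concavity
  have hconc_sum : ∀ s : Finset (Fin N),
      ConcaveOn ℝ (Set.Ico (0:ℝ) 1) (fun f => ∑ i ∈ s, p i * Real.log (1 + f * c i)) := by
    intro s
    induction s using Finset.induction with
    | empty => simpa using concaveOn_const (0:ℝ) (convex_Ico (0:ℝ) 1)
    | @insert a s ha ih =>
        simp only [Finset.sum_insert ha]
        exact (term_concave (c a) (p a) (hp a).le (hpos a)).add ih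
  have hstrict : StrictConcaveOn ℝ (Set.Ico (0:ℝ) 1) G := by
    have h1 := (term_strict (c j) (p j) (hc_ne j) (hp j) (hpos j)).add_concaveOn
      (hconc_sum (Finset.univ.erase j))
    have : G = fun f => p j * Real.log (1 + f * c j) +
        ∑ i ∈ Finset.univ.erase j, p i * Real.log (1 + f * c i) := by
      funext f
      rw [hG_def]
      exact (Finset.add_sum_erase _ _ (Finset.mem_univ j)).symm
    rw [this]
    exact h1
  have hG0 : G 0 = 0 := by simp [hG_def]
  -- positive value at small f₀
  have hS : 0 < ∑ i, p i * c i := by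
    have : ∑ i, p i * c i = (∑ i, p i * t i) / that := by
      rw [Finset.sum_div]
      exact Finset.sum_congr rfl fun i _ => by rw [hc_def]; ring
    rw [this]; positivity
  set S := ∑ i, p i * c i with hS_def
  have hQ : 0 < ∑ i, p i * (c i)^2 := by
    apply Finset.sum_pos
    · intro i _
      exact mul_pos (hp i) (lt_of_le_of_ne (sq_nonneg _) (Ne.symm (pow_ne_zero 2 (hc_ne i))))
    · exact Finset.univ_nonempty_iff.2 (Fin.pos_iff_nonempty.mp hN)
  set Q := ∑ i, p i * (c i)^2 with hQ_def
  set f₀ : ℝ := min (1/2) (S/(4*Q)) with hf₀_def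
  have hf₀_pos : 0 < f₀ := lt_min (by norm_num) (by positivity)
  have hf₀_half : f₀ ≤ 1/2 := min_le_left _ _
  have hf₀_Q : f₀ ≤ S/(4*Q) := min_le_right _ _
  have hGf₀ : 0 < G f₀ := by
    have hlb : ∀ i, f₀ * c i - 2*(f₀ * c i)^2 ≤ Real.log (1 + f₀ * c i) := by
      intro i
      apply my_log_ge
      rcases lt_or_gt_of_ne (hc_ne i) with h | h
      · nlinarith [hc_ge i]
      · nlinarith
    have h1 : ∑ i, p i * (f₀ * c i - 2*(f₀ * c i)^2) ≤ G f₀ := by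
      rw [hG_def]
      exact Finset.sum_le_sum fun i _ => mul_le_mul_of_nonneg_left (hlb i) (hp i).le
    have h2 : ∑ i, p i * (f₀ * c i - 2*(f₀ * c i)^2) = f₀ * S - 2 * f₀^2 * Q := by
      rw [hS_def, hQ_def, Finset.mul_sum, Finset.mul_sum, ← Finset.sum_sub_distrib]
      exact Finset.sum_congr rfl fun i _ => by ring
    have h3 : 0 < f₀ * S - 2 * f₀^2 * Q := by
      have : 2 * f₀^2 * Q ≤ f₀ * S / 2 := by
        have := mul_le_mul_of_nonneg_left hf₀_Q (by positivity : (0:ℝ) ≤ 2 * f₀ * Q)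
        calc 2 * f₀^2 * Q = 2 * f₀ * Q * f₀ := by ring
          _ ≤ 2 * f₀ * Q * (S/(4*Q)) := mul_le_mul_of_nonneg_left hf₀_Q (by positivity)
          _ = f₀ * S / 2 := by field_simp; ring
      nlinarith [mul_pos hf₀_pos hS]
    linarith
  -- bound B and cutoff cc
  set B := ∑ i, p i * |c i| with hB_def
  have hB : 0 ≤ B := Finset.sum_nonneg fun i _ => mul_nonneg (hp i).le (abs_nonneg _)
  set cc : ℝ := max (1/2) (1 - Real.exp (-(B+1)/(p j))) with hcc_def
  have hcc_lt1 : cc < 1 := by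
    apply max_lt (by norm_num)
    have := Real.exp_pos (-(B+1)/(p j))
    linarith
  have hcc_pos : (0:ℝ) < cc := lt_of_lt_of_le (by norm_num) (le_max_left _ _)
  have hbig : ∀ f : ℝ, cc < f → f < 1 → G f < 0 := by
    intro f hcf hf1
    have hf0 : 0 ≤ f := le_trans hcc_pos.le hcf.le
    have hfmem : f ∈ Set.Ico (0:ℝ) 1 := ⟨hf0, hf1⟩
    -- bound non-j terms
    have hrest : ∑ i ∈ Finset.univ.erase j, p i * Real.log (1 + f * c i) ≤ B := by
      have h1 : ∀ i, p i * Real.log (1 + f * c i) ≤ p i * |c i| := by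
        intro i
        apply mul_le_mul_of_nonneg_left _ (hp i).le
        have h2 : Real.log (1 + f * c i) ≤ f * c i :=
          my_log_le _ (by linarith [hpos i f hfmem])
        have h3 : f * c i ≤ |c i| := by
          calc f * c i ≤ |f * c i| := le_abs_self _
            _ = f * |c i| := by rw [abs_mul, abs_of_nonneg hf0]
            _ ≤ 1 * |c i| := mul_le_mul_of_nonneg_right hf1.le (abs_nonneg _)
            _ = |c i| := one_mul _
        linarith
      calc ∑ i ∈ Finset.univ.erase j, p i * Real.log (1 + f * c i)
          ≤ ∑ i ∈ Finset.univ.erase j, p i * |c i| :=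
            Finset.sum_le_sum fun i _ => h1 i
        _ ≤ ∑ i, p i * |c i| := Finset.sum_le_sum_of_subset_of_nonneg
            (Finset.erase_subset _ _) (fun i _ _ => mul_nonneg (hp i).le (abs_nonneg _))
        _ = B := rfl
    -- bound j term
    have hjterm : p j * Real.log (1 + f * c j) < -(B+1) := by
      rw [hcj]
      have h1f : 0 < 1 - f := by linarith
      have hexp : 1 - f < Real.exp (-(B+1)/(p j)) := by
        have : 1 - Real.exp (-(B+1)/(p j)) ≤ cc := le_max_right _ _
        linarith
      have hlog : Real.log (1 - f) < -(B+1)/(p j) := by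
        calc Real.log (1 - f) < Real.log (Real.exp (-(B+1)/(p j))) :=
              Real.log_lt_log h1f hexp
          _ = -(B+1)/(p j) := Real.log_exp _
      have := mul_lt_mul_of_pos_left hlog (hp j)
      rw [mul_div_cancel₀] at this
      · convert this using 2; rfl; ring
      · exact (hp j).ne'
    have : G f = p j * Real.log (1 + f * c j) +
        ∑ i ∈ Finset.univ.erase j, p i * Real.log (1 + f * c i) :=
      (Finset.add_sum_erase _ _ (Finset.mem_univ j)).symm
    rw [this]
    linarith
  -- continuity on Icc 0 cc
  have hsub : Set.Icc (0:ℝ) cc ⊆ Set.Ico (0:ℝ) 1 := fun x hx => ⟨hx.1, lt_of_le_of_lt hx.2 hcc_lt1⟩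
  have hGcont : ContinuousOn G (Set.Icc 0 cc) := by
    apply continuousOn_finset_sum
    intro i _
    apply ContinuousOn.mul continuousOn_const
    apply ContinuousOn.log
    · fun_prop
    · intro x hx
      exact (hpos i x (hsub hx)).ne'
  obtain ⟨fopt, hfopt_mem, hfopt_max⟩ := isCompact_Icc.exists_isMaxOn
    (Set.nonempty_Icc.2 hcc_pos.le) hGcont
  rw [isMaxOn_iff] at hfopt_max
  -- global max
  have hglob : ∀ f ∈ Set.Ico (0:ℝ) 1, G f ≤ G fopt := by
    intro f hf
    by_cases hfc : f ≤ cc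
    · exact hfopt_max f ⟨hf.1, hfc⟩
    · push_neg at hfc
      have h1 : G f < 0 := hbig f hfc hf.2
      have h2 : G 0 ≤ G fopt := hfopt_max 0 (Set.left_mem_Icc.2 hcc_pos.le)
      rw [hG0] at h2
      linarith
  -- fopt ∈ Ioo 0 1
  have hf₀_mem : f₀ ∈ Set.Icc (0:ℝ) cc :=
    ⟨hf₀_pos.le, le_trans hf₀_half (le_max_left _ _)⟩
  have hGfopt_pos : 0 < G fopt := lt_of_lt_of_le hGf₀ (hfopt_max f₀ hf₀_mem)
  have hfopt_pos : 0 < fopt := by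
    rcases lt_or_eq_of_le hfopt_mem.1 with h | h
    · exact h
    · exfalso; rw [← h, hG0] at hGfopt_pos; exact lt_irrefl 0 hGfopt_pos
  have hfopt_lt1 : fopt < 1 := lt_of_le_of_lt hfopt_mem.2 hcc_lt1
  refine ⟨fopt, ⟨⟨hfopt_pos, hfopt_lt1⟩, ?_⟩, ?_⟩
  · intro f hf
    rw [hGeq f, hGeq fopt]
    exact hglob f hf
  · rintro y ⟨hy_mem, hy_max⟩
    by_contra hne
    have hfopt_Ico : fopt ∈ Set.Ico (0:ℝ) 1 := ⟨hfopt_pos.le, hfopt_lt1⟩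
    have hy_Ico : y ∈ Set.Ico (0:ℝ) 1 := ⟨hy_mem.1.le, hy_mem.2⟩
    have heq1 : G fopt ≤ G y := by
      have := hy_max fopt hfopt_Ico
      rwa [hGeq, hGeq] at this
    have heq2 : G y ≤ G fopt := hglob y hy_Ico
    have heqv : G y = G fopt := le_antisymm heq2 heq1
    have := hstrict.2 hy_Ico hfopt_Ico hne (by norm_num : (0:ℝ) < 1/2)
      (by norm_num : (0:ℝ) < 1/2) (by norm_num)
    rw [heqv] at this
    have hmid : (1/2 : ℝ) • y + (1/2 : ℝ) • fopt ∈ Set.Ico (0:ℝ) 1 :=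
      (convex_Ico (0:ℝ) 1) hy_Ico hfopt_Ico (by norm_num) (by norm_num) (by norm_num)
    have := lt_of_lt_of_le this (hglob _ hmid)
    simp only [smul_eq_mul] at this
    linarith
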